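/- The family of univariate t-distribution densities {f_{ν,μ,σ} : ν a positive integer, μ ∈ ℝ, σ > 0}, where f_{ν,μ,σ}(x) = c_{ν,μ,σ} (1 + (x−μ)²/(νσ²))^{−(ν+1)/2} with c_{ν,μ,σ} the normalizing constant making ∫_ℝ f_{ν,μ,σ}(x) dx = 1, is linearly independent: if (ν₁,μ₁,σ₁),…,(νₙ,μₙ,σₙ) are distinct parameter triples and λ₁,…,λₙ are real numbers with Σⱼ λⱼ f_{νⱼ,μⱼ,σⱼ}(x) = 0 for all x ∈ ℝ, then all λⱼ = 0. -/

import Mathlib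

open Real MeasureTheory

/-- The (unnormalized) shape of the univariate `t`-density with `ν` degrees of freedom,
location `μ` and scale `σ`. -/
noncomputable def tShape (ν : ℕ) (μ σ x : ℝ) : ℝ :=
  (1 + (x - μ) ^ 2 / (ν * σ ^ 2)) ^ (-(((ν : ℝ) + 1) / 2))

open Complex Filter Topology in
lemma tShape_slit_aux {m b : ℝ} (hb : 0 < b) {z : ℂ}
    (h : z.im ^ 2 < b ∨ (z.re ≠ m ∧ z.im ≠ 0)) :
    1 + (z - (m : ℂ)) ^ 2 / (b : ℂ) ∈ Complex.slitPlane := by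
  have hb' : (b : ℂ) ≠ 0 := Complex.ofReal_ne_zero.2 hb.ne'
  have hre : (1 + (z - (m : ℂ)) ^ 2 / (b : ℂ)).re = 1 + ((z.re - m) ^ 2 - z.im ^ 2) / b := by
    rw [sq, sq, sq]
    simp [Complex.add_re, Complex.div_re, Complex.mul_re, Complex.sub_re, Complex.sub_im,
      Complex.normSq_ofReal]
    field_simp
  have him : (1 + (z - (m : ℂ)) ^ 2 / (b : ℂ)).im = 2 * (z.re - m) * z.im / b := by
    rw [sq]
    simp [Complex.add_im, Complex.div_im, Complex.mul_im, Complex.mul_re, Complex.sub_re,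
      Complex.sub_im, Complex.normSq_ofReal]
    field_simp
    ring
  rw [Complex.mem_slitPlane_iff]
  by_cases ht : z.im = 0
  · left
    rw [hre, ht]
    have h1 : 0 ≤ (z.re - m) ^ 2 / b := by positivity
    norm_num
    nlinarith [h1]
  · by_cases ha : z.re = m
    · left
      rcases h with h | h
      · rw [hre, ha]
        have h1 : z.im ^ 2 / b < 1 := (div_lt_one hb).2 h
        have h2 : ((m - m) ^ 2 - z.im ^ 2) / b = -(z.im ^ 2 / b) := by
          rw [sub_self]
          ring
        rw [h2]
        linarith
      · exact absurd ha h.1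
    · right
      rw [him]
      have : z.re - m ≠ 0 := sub_ne_zero.2 ha
      positivity

set_option maxHeartbeats 2000000 in
open Complex Filter Topology in
lemma tShape_aux (n : ℕ) (ν : Fin n → ℕ) (μ σ : Fin n → ℝ)
    (hν : ∀ j, 0 < ν j) (hσ : ∀ j, 0 < σ j)
    (hdist : Function.Injective fun j => (ν j, μ j, σ j))
    (d : Fin n → ℝ) :
    ∀ s : Finset (Fin n),
      (∀ x : ℝ, ∑ j ∈ s, d j * tShape (ν j) (μ j) (σ j) x = 0) → ∀ j ∈ s, d j = 0 := by
  intro s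
  induction s using Finset.strongInduction with
  | _ s ih =>
  intro hsum j hj
  have hs : s.Nonempty := ⟨j, hj⟩
  classical
  -- basic data
  set b : Fin n → ℝ := fun i => (ν i : ℝ) * σ i ^ 2 with hbdef
  have hb : ∀ i, 0 < b i := fun i =>
    mul_pos (by exact_mod_cast hν i) (pow_pos (hσ i) 2)
  set p : Fin n → ℝ := fun i => ((ν i : ℝ) + 1) / 2 with hpdef
  have hppos : ∀ i, 0 < p i := fun i => by
    have : (0:ℝ) ≤ (ν i : ℝ) := Nat.cast_nonneg _
    simp only [hpdef]
    linarith
  obtain ⟨j₀, hj₀s, hj₀min⟩ := s.exists_min_image b hs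
  set B := b j₀ with hBdef
  set M := μ j₀ with hMdef
  have hB : 0 < B := hb j₀
  set r := Real.sqrt B with hrdef
  have hr : 0 < r := Real.sqrt_pos.2 hB
  have hr2 : r ^ 2 = B := Real.sq_sqrt hB.le
  set G := s.filter (fun i => μ i = M ∧ b i = B) with hGdef
  have hj₀G : j₀ ∈ G := by simp [hGdef, hj₀s]; exact ⟨hMdef.symm, hBdef.symm⟩
  obtain ⟨k, hkG, hkmax⟩ := G.exists_max_image ν ⟨j₀, hj₀G⟩
  have hks : k ∈ s := (Finset.mem_filter.1 hkG).1
  have hkμ : μ k = M := ((Finset.mem_filter.1 hkG).2).1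
  have hkb : b k = B := ((Finset.mem_filter.1 hkG).2).2
  -- the complex extension
  set F : ℂ → ℂ := fun z =>
    ∑ i ∈ s, (d i : ℂ) * (1 + (z - (μ i : ℂ)) ^ 2 / (b i : ℂ)) ^ (-(p i : ℂ)) with hFdef
  set U : Set ℂ := {z | z.im ^ 2 < B} with hUdef
  have hUopen : IsOpen U := by
    have : Continuous fun z : ℂ => z.im ^ 2 := by continuity
    exact isOpen_lt this continuous_const
  have hUpre : IsPreconnected U := by
    have hUeq : U = Complex.imLm ⁻¹' Set.Ioo (-r) r := by
      ext z
      simp only [hUdef, Set.mem_setOf_eq, Set.mem_preimage, Set.mem_Ioo, Complex.imLm_coe]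
      constructor
      · intro hz
        constructor <;> nlinarith
      · rintro ⟨h1, h2⟩
        nlinarith
    rw [hUeq]
    exact ((convex_Ioo (-r) r).linear_preimage Complex.imLm).isPreconnected
  have hFdiff : DifferentiableOn ℂ F U := by
    apply DifferentiableOn.fun_sum
    intro i hi
    intro z hz
    apply DifferentiableAt.differentiableWithinAt
    have hbase : DifferentiableAt ℂ (fun z : ℂ => 1 + (z - (μ i : ℂ)) ^ 2 / (b i : ℂ)) z := by
      apply DifferentiableAt.const_add
      apply DifferentiableAt.div_const
      exact (differentiableAt_id.sub (differentiableAt_const _)).pow 2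
    have hslit : 1 + (z - (μ i : ℂ)) ^ 2 / (b i : ℂ) ∈ Complex.slitPlane :=
      tShape_slit_aux (hb i) (Or.inl (lt_of_lt_of_le hz (hj₀min i hi)))
    exact DifferentiableAt.const_mul (hbase.cpow (differentiableAt_const _) hslit) _
  have hFanalytic : AnalyticOnNhd ℂ F U := hFdiff.analyticOnNhd hUopen
  have hFreal : ∀ x : ℝ, F (x : ℂ) = 0 := by
    intro x
    have heq : F (x : ℂ) = ((∑ i ∈ s, d i * tShape (ν i) (μ i) (σ i) x : ℝ) : ℂ) := by
      rw [hFdef]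
      push_cast
      refine Finset.sum_congr rfl fun i hi => ?_
      have h1 : (0:ℝ) ≤ 1 + (x - μ i) ^ 2 / b i := by positivity
      have hbase : 1 + ((x:ℂ) - (μ i : ℂ)) ^ 2 / (b i : ℂ)
          = ((1 + (x - μ i) ^ 2 / b i : ℝ) : ℂ) := by push_cast; ring
      rw [hbase, ← Complex.ofReal_neg, ← Complex.ofReal_cpow h1]
      norm_cast
    rw [heq, hsum x, Complex.ofReal_zero]
  have h0U : (0 : ℂ) ∈ U := by simp [hUdef, hB]
  have hfreq : ∃ᶠ z in 𝓝[≠] (0 : ℂ), F z = 0 := by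
    have hu : Tendsto (fun n : ℕ => ((1 / (n + 1) : ℝ) : ℂ)) atTop (𝓝[≠] (0 : ℂ)) := by
      apply tendsto_nhdsWithin_of_tendsto_nhds_of_eventually_within
      · have h1 : Tendsto (fun n : ℕ => (1 / (n + 1) : ℝ)) atTop (𝓝 0) :=
          tendsto_one_div_add_atTop_nhds_zero_nat
        have h2 := (Complex.continuous_ofReal.tendsto 0).comp h1
        simpa [Function.comp_def, one_div] using h2
      · filter_upwards with m
        have : (0:ℝ) < 1 / (m + 1) := by positivity
        simp only [Set.mem_compl_iff, Set.mem_singleton_iff]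
        exact_mod_cast Complex.ofReal_ne_zero.2 this.ne'
    exact hu.frequently (Filter.Frequently.of_forall fun m => hFreal _)
  have hFU : Set.EqOn F 0 U :=
    hFanalytic.eqOn_zero_of_preconnected_of_frequently_eq_zero hUpre h0U hfreq
  -- the limit argument
  set w : ℝ → ℝ := fun t => 1 - t ^ 2 / B with hwdef
  have hwmem : ∀ t ∈ Set.Ioo 0 r, ((M : ℂ) + t * Complex.I) ∈ U ∧ 0 < w t := by
    rintro t ⟨ht0, htr⟩
    have him : ((M : ℂ) + t * Complex.I).im = t := by simp
    have ht2 : t ^ 2 < B := by nlinarith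
    constructor
    · rw [hUdef]
      simpa [him] using ht2
    · have : t ^ 2 / B < 1 := (div_lt_one hB).2 ht2
      simp only [hwdef]
      linarith
  set Φ : ℝ → ℂ := fun t => ((w t ^ p k : ℝ) : ℂ) * F ((M : ℂ) + t * Complex.I) with hΦdef
  have hIoo : Set.Ioo 0 r ∈ 𝓝[<] r := Ioo_mem_nhdsLT_of_mem ⟨hr, le_refl r⟩
  have hΦ0 : ∀ᶠ t in 𝓝[<] r, Φ t = 0 := by
    filter_upwards [hIoo] with t ht
    rw [hΦdef]
    simp only
    rw [hFU (hwmem t ht).1]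
    simp
  have hwlim : Tendsto w (𝓝[<] r) (𝓝[>] 0) := by
    apply tendsto_nhdsWithin_of_tendsto_nhds_of_eventually_within
    · have hc : Continuous w := by
        simp only [hwdef]
        exact continuous_const.sub ((continuous_pow 2).div_const B)
      have h1 := (hc.tendsto r).mono_left (nhdsWithin_le_nhds (s := Set.Iio r))
      have h2 : w r = 0 := by
        simp only [hwdef, hr2]
        field_simp
        norm_num
      rwa [h2] at h1
    · filter_upwards [hIoo] with t ht
      exact (hwmem t ht).2
  have hpk0 : 0 < p k := hppos k
  have hwpk : Tendsto (fun t => w t ^ p k) (𝓝[<] r) (𝓝 0) := by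
    have hc : ContinuousAt (fun x : ℝ => x ^ p k) 0 :=
      Real.continuousAt_rpow_const 0 _ (Or.inr hpk0.le)
    have h2 : Tendsto w (𝓝[<] r) (𝓝 0) := hwlim.mono_right nhdsWithin_le_nhds
    have h3 := hc.tendsto.comp h2
    simpa [Function.comp_def, Real.zero_rpow hpk0.ne'] using h3
  have hΦlim : Tendsto Φ (𝓝[<] r) (𝓝 ((d k : ℂ))) := by
    have hterm : ∀ i ∈ s, Tendsto
        (fun t : ℝ => ((w t ^ p k : ℝ) : ℂ) *
          ((d i : ℂ) * (1 + ((M : ℂ) + t * Complex.I - (μ i : ℂ)) ^ 2 / (b i : ℂ)) ^ (-(p i : ℂ))))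
        (𝓝[<] r) (𝓝 (if i = k then (d k : ℂ) else 0)) := by
      intro i hi
      by_cases hiG : i ∈ G
      · have hiμ : μ i = M := ((Finset.mem_filter.1 hiG).2).1
        have hib : b i = B := ((Finset.mem_filter.1 hiG).2).2
        have hbase : ∀ t : ℝ,
            1 + ((M : ℂ) + t * Complex.I - (μ i : ℂ)) ^ 2 / (b i : ℂ) = ((w t : ℝ) : ℂ) := by
          intro t
          have hI : ((M : ℂ) + t * Complex.I - (M : ℂ)) ^ 2 = -((t ^ 2 : ℝ) : ℂ) := by
            have h4 : (M : ℂ) + t * Complex.I - (M : ℂ) = t * Complex.I := by ring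
            rw [h4, mul_pow, Complex.I_sq]
            push_cast
            ring
          rw [hiμ, hib, hI]
          simp only [hwdef]
          push_cast
          ring
        have hev : (fun t : ℝ => ((w t ^ p k : ℝ) : ℂ) *
              ((d i : ℂ) * (1 + ((M : ℂ) + t * Complex.I - (μ i : ℂ)) ^ 2 / (b i : ℂ))
                ^ (-(p i : ℂ))))
            =ᶠ[𝓝[<] r] fun t : ℝ => (d i : ℂ) * ((w t ^ (p k - p i) : ℝ) : ℂ) := by
          filter_upwards [hIoo] with t ht
          have hw0 : 0 < w t := (hwmem t ht).2
          rw [hbase t, ← Complex.ofReal_neg, ← Complex.ofReal_cpow hw0.le]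
          have h5 : w t ^ p k * w t ^ (-(p i)) = w t ^ (p k - p i) := by
            rw [← Real.rpow_add hw0]
            ring_nf
          push_cast [← h5]
          ring
        apply Tendsto.congr' hev.symm
        by_cases hik : i = k
        · subst hik
          simp only [if_pos rfl, sub_self, Real.rpow_zero, Complex.ofReal_one, mul_one]
          exact tendsto_const_nhds
        · have hle : ν i ≤ ν k := hkmax i hiG
          have hne : ν i ≠ ν k := by
            intro hνik
            have hbik : (ν i : ℝ) * σ i ^ 2 = (ν k : ℝ) * σ k ^ 2 := by
              have := hib.trans hkb.symm
              simpa [hbdef] using this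
            rw [hνik] at hbik
            have hν0 : ((ν k : ℝ)) ≠ 0 := by
              exact_mod_cast (hν k).ne'
            have hσ2 : σ i ^ 2 = σ k ^ 2 := mul_left_cancel₀ hν0 hbik
            have hσik : σ i = σ k := by nlinarith [hσ i, hσ k]
            have : (ν i, μ i, σ i) = (ν k, μ k, σ k) := by
              rw [hνik, hiμ, hkμ, hσik]
            exact hik (hdist this)
          have hνlt : (ν i : ℝ) < (ν k : ℝ) := by exact_mod_cast lt_of_le_of_ne hle hne
          have hexp : 0 < p k - p i := by
            simp only [hpdef]
            linarith
          have h1 : Tendsto (fun t => w t ^ (p k - p i)) (𝓝[<] r) (𝓝 0) := by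
            have hc : ContinuousAt (fun x : ℝ => x ^ (p k - p i)) 0 :=
              Real.continuousAt_rpow_const 0 _ (Or.inr hexp.le)
            have h2 : Tendsto w (𝓝[<] r) (𝓝 0) := hwlim.mono_right nhdsWithin_le_nhds
            have h3 := hc.tendsto.comp h2
            simpa [Function.comp_def, Real.zero_rpow hexp.ne'] using h3
          have h4 := ((Complex.continuous_ofReal.tendsto 0).comp h1).const_mul ((d i : ℂ))
          simp only [if_neg hik]
          simpa [Function.comp_def] using h4
      · -- i ∉ G : the term involving i stays bounded
        have hz0 : ((M : ℂ) + r * Complex.I).re = M := by simp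
        have hz0' : ((M : ℂ) + r * Complex.I).im = r := by simp
        have hslit : 1 + ((M : ℂ) + r * Complex.I - (μ i : ℂ)) ^ 2 / (b i : ℂ)
            ∈ Complex.slitPlane := by
          apply tShape_slit_aux (hb i)
          by_cases hbi : b i = B
          · right
            have hμi : μ i ≠ M := by
              intro hμM
              exact hiG (Finset.mem_filter.2 ⟨hi, hμM, hbi⟩)
            constructor
            · rw [hz0]
              exact fun hMμ => hμi hMμ.symm
            · rw [hz0']
              exact hr.ne'
          · left
            rw [hz0', hr2]
            exact lt_of_le_of_ne (hj₀min i hi) (Ne.symm hbi)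
        have hcont : Tendsto
            (fun t : ℝ => (d i : ℂ) *
              (1 + ((M : ℂ) + t * Complex.I - (μ i : ℂ)) ^ 2 / (b i : ℂ)) ^ (-(p i : ℂ)))
            (𝓝[<] r)
            (𝓝 ((d i : ℂ) *
              (1 + ((M : ℂ) + r * Complex.I - (μ i : ℂ)) ^ 2 / (b i : ℂ)) ^ (-(p i : ℂ)))) := by
          have hg1 : Continuous fun t : ℝ => (M : ℂ) + (t : ℂ) * Complex.I - (μ i : ℂ) :=
            (continuous_const.add (Complex.continuous_ofReal.mul continuous_const)).sub
              continuous_const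
          have hbasec : Continuous
              (fun t : ℝ => 1 + ((M : ℂ) + t * Complex.I - (μ i : ℂ)) ^ 2 / (b i : ℂ)) :=
            continuous_const.add ((hg1.pow 2).div_const _)
          have hcp : ContinuousAt (fun z : ℂ => z ^ (-(p i : ℂ)))
              (1 + ((M : ℂ) + r * Complex.I - (μ i : ℂ)) ^ 2 / (b i : ℂ)) :=
            continuousAt_cpow_const hslit
          have hcomp := ContinuousAt.comp (x := r) hcp hbasec.continuousAt
          have := (hcomp.tendsto.const_mul ((d i : ℂ))).mono_left
            (nhdsWithin_le_nhds (s := Set.Iio r))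
          simpa [Function.comp_def] using this
        have h1 : Tendsto (fun t : ℝ => ((w t ^ p k : ℝ) : ℂ)) (𝓝[<] r) (𝓝 0) := by
          have := (Complex.continuous_ofReal.tendsto 0).comp hwpk
          simpa [Function.comp_def] using this
        have h2 := h1.mul hcont
        rw [zero_mul] at h2
        simp only [if_neg (by rintro rfl; exact hiG hkG : ¬ i = k)]
        exact h2
    have hsum_t := tendsto_finset_sum s hterm
    have hΦeq : ∀ t : ℝ, Φ t = ∑ i ∈ s, ((w t ^ p k : ℝ) : ℂ) *
        ((d i : ℂ) * (1 + ((M : ℂ) + t * Complex.I - (μ i : ℂ)) ^ 2 / (b i : ℂ))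
          ^ (-(p i : ℂ))) := by
      intro t
      rw [hΦdef]
      simp only [hFdef]
      rw [Finset.mul_sum]
    have hsumif : (∑ i ∈ s, if i = k then (d k : ℂ) else 0) = (d k : ℂ) := by
      rw [Finset.sum_ite_eq' s k fun _ => (d k : ℂ)]
      simp [hks]
    rw [hsumif] at hsum_t
    exact hsum_t.congr (fun t => (hΦeq t).symm)
  have : Tendsto (fun _ : ℝ => (0 : ℂ)) (𝓝[<] r) (𝓝 ((d k : ℂ))) := hΦlim.congr' hΦ0
  have hdk : ((d k : ℂ)) = 0 := tendsto_nhds_unique this tendsto_const_nhds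
  have hdk' : d k = 0 := by exact_mod_cast hdk
  -- recursion
  by_cases hjk : j = k
  · rw [hjk]; exact hdk'
  · have hsum' : ∀ x : ℝ, ∑ i ∈ s.erase k, d i * tShape (ν i) (μ i) (σ i) x = 0 := by
      intro x
      have h1 := hsum x
      rw [← Finset.add_sum_erase s _ hks, hdk', zero_mul, zero_add] at h1
      exact h1
    exact ih (s.erase k) (Finset.erase_ssubset hks) hsum' j (Finset.mem_erase.2 ⟨hjk, hj⟩)

/-- The family of univariate `t`-distribution densities
`f_{ν,μ,σ}(x) = c_{ν,μ,σ} (1 + (x−μ)²/(νσ²))^{−(ν+1)/2}` (with `c_{ν,μ,σ}` the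
normalizing constant) is linearly independent. -/
theorem tDensity_linearIndependent (n : ℕ) (ν : Fin n → ℕ) (μ σ : Fin n → ℝ)
    (hν : ∀ j, 0 < ν j) (hσ : ∀ j, 0 < σ j)
    (hdist : Function.Injective fun j => (ν j, μ j, σ j))
    (c : Fin n → ℝ) (hc : ∀ j, 0 < c j)
    (hnorm : ∀ j, ∫ x : ℝ, c j * tShape (ν j) (μ j) (σ j) x = 1)
    (lam : Fin n → ℝ)
    (h : ∀ x : ℝ, ∑ j, lam j * (c j * tShape (ν j) (μ j) (σ j) x) = 0) :
    ∀ j, lam j = 0 := by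
  intro j
  have h' : ∀ x : ℝ, ∑ i ∈ Finset.univ, (lam i * c i) * tShape (ν i) (μ i) (σ i) x = 0 := by
    intro x
    rw [← h x]
    exact Finset.sum_congr rfl fun i _ => by ring
  have hz := tShape_aux n ν μ σ hν hσ hdist (fun i => lam i * c i) Finset.univ h' j
    (Finset.mem_univ j)
  rcases mul_eq_zero.1 hz with h1 | h2
  · exact h1
  · exact absurd h2 (hc j).ne'
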